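/- Let E be a field of characteristic 2, a, c ∈ E and b ∈ E^× with b ∉ E^{×2}. Then the quaternion algebras [a,b)_E and [c,b)_E are isomorphic as E-algebras if and only if there exists d ∈ E with a + c + d²·b ∈ ℘(E). -/

import Mathlib

/-- The defining relations of the characteristic-2 quaternion algebra `[a,b)_E`:
generators `u = X 0`, `v = X 1` with `u² = a + u` (i.e. `u² + u = a`), `v² = b`,
and `u v = v u + v`. -/
inductive QuatRel (E : Type*) [Field E] (a b : E) :
    FreeAlgebra E (Fin 2) → FreeAlgebra E (Fin 2) → Prop
  | u_sq : QuatRel E a b (FreeAlgebra.ι E 0 * FreeAlgebra.ι E 0)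
      (algebraMap E _ a + FreeAlgebra.ι E 0)
  | v_sq : QuatRel E a b (FreeAlgebra.ι E 1 * FreeAlgebra.ι E 1) (algebraMap E _ b)
  | mul : QuatRel E a b (FreeAlgebra.ι E 0 * FreeAlgebra.ι E 1)
      (FreeAlgebra.ι E 1 * FreeAlgebra.ι E 0 + FreeAlgebra.ι E 1)

/-- The characteristic-2 quaternion algebra `[a,b)_E`. -/
def Quat (E : Type*) [Field E] (a b : E) := RingQuot (QuatRel E a b)

noncomputable instance (E : Type*) [Field E] (a b : E) : Ring (Quat E a b) :=
  inferInstanceAs (Ring (RingQuot (QuatRel E a b)))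

noncomputable instance (E : Type*) [Field E] (a b : E) : Algebra E (Quat E a b) :=
  inferInstanceAs (Algebra E (RingQuot (QuatRel E a b)))


/-- Explicit 4-dimensional model of the char-2 quaternion algebra `[c,b)`. -/
@[ext]
structure Q4 (E : Type*) (c b : E) : Type _ where
  re : E
  imI : E
  imJ : E
  imK : E

namespace Q4

variable {E : Type*} [CommRing E] {c b : E}

instance : Zero (Q4 E c b) := ⟨⟨0,0,0,0⟩⟩
instance : One (Q4 E c b) := ⟨⟨1,0,0,0⟩⟩
instance : Add (Q4 E c b) :=
  ⟨fun x y => ⟨x.re + y.re, x.imI + y.imI, x.imJ + y.imJ, x.imK + y.imK⟩⟩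
instance : Neg (Q4 E c b) := ⟨fun x => ⟨-x.re, -x.imI, -x.imJ, -x.imK⟩⟩
instance : SMul E (Q4 E c b) :=
  ⟨fun r x => ⟨r * x.re, r * x.imI, r * x.imJ, r * x.imK⟩⟩
instance : Mul (Q4 E c b) :=
  ⟨fun x y =>
    ⟨x.re * y.re + c * x.imI * y.imI + b * x.imJ * y.imJ + b * x.imJ * y.imK
        - c * b * x.imK * y.imK,
      x.re * y.imI + x.imI * y.re + x.imI * y.imI - b * x.imJ * y.imK + b * x.imK * y.imJ,
      x.re * y.imJ + x.imJ * y.re + x.imJ * y.imI + c * x.imI * y.imK - c * x.imK * y.imI,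
      x.re * y.imK + x.imK * y.re + x.imI * y.imJ - x.imJ * y.imI + x.imI * y.imK⟩⟩

@[simp] lemma zero_re : (0 : Q4 E c b).re = 0 := rfl
@[simp] lemma zero_imI : (0 : Q4 E c b).imI = 0 := rfl
@[simp] lemma zero_imJ : (0 : Q4 E c b).imJ = 0 := rfl
@[simp] lemma zero_imK : (0 : Q4 E c b).imK = 0 := rfl
@[simp] lemma one_re : (1 : Q4 E c b).re = 1 := rfl
@[simp] lemma one_imI : (1 : Q4 E c b).imI = 0 := rfl
@[simp] lemma one_imJ : (1 : Q4 E c b).imJ = 0 := rfl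
@[simp] lemma one_imK : (1 : Q4 E c b).imK = 0 := rfl
@[simp] lemma add_re (x y : Q4 E c b) : (x + y).re = x.re + y.re := rfl
@[simp] lemma add_imI (x y : Q4 E c b) : (x + y).imI = x.imI + y.imI := rfl
@[simp] lemma add_imJ (x y : Q4 E c b) : (x + y).imJ = x.imJ + y.imJ := rfl
@[simp] lemma add_imK (x y : Q4 E c b) : (x + y).imK = x.imK + y.imK := rfl
@[simp] lemma neg_re (x : Q4 E c b) : (-x).re = -x.re := rfl
@[simp] lemma neg_imI (x : Q4 E c b) : (-x).imI = -x.imI := rfl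
@[simp] lemma neg_imJ (x : Q4 E c b) : (-x).imJ = -x.imJ := rfl
@[simp] lemma neg_imK (x : Q4 E c b) : (-x).imK = -x.imK := rfl
@[simp] lemma smul_re (r : E) (x : Q4 E c b) : (r • x).re = r * x.re := rfl
@[simp] lemma smul_imI (r : E) (x : Q4 E c b) : (r • x).imI = r * x.imI := rfl
@[simp] lemma smul_imJ (r : E) (x : Q4 E c b) : (r • x).imJ = r * x.imJ := rfl
@[simp] lemma smul_imK (r : E) (x : Q4 E c b) : (r • x).imK = r * x.imK := rfl
@[simp] lemma mul_re (x y : Q4 E c b) :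
    (x * y).re = x.re * y.re + c * x.imI * y.imI + b * x.imJ * y.imJ + b * x.imJ * y.imK
      - c * b * x.imK * y.imK := rfl
@[simp] lemma mul_imI (x y : Q4 E c b) :
    (x * y).imI = x.re * y.imI + x.imI * y.re + x.imI * y.imI - b * x.imJ * y.imK
      + b * x.imK * y.imJ := rfl
@[simp] lemma mul_imJ (x y : Q4 E c b) :
    (x * y).imJ = x.re * y.imJ + x.imJ * y.re + x.imJ * y.imI + c * x.imI * y.imK
      - c * x.imK * y.imI := rfl
@[simp] lemma mul_imK (x y : Q4 E c b) :
    (x * y).imK = x.re * y.imK + x.imK * y.re + x.imI * y.imJ - x.imJ * y.imI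
      + x.imI * y.imK := rfl

instance : AddCommGroup (Q4 E c b) where
  add_assoc x y z := by ext <;> simp <;> ring
  zero_add x := by ext <;> simp
  add_zero x := by ext <;> simp
  add_comm x y := by ext <;> simp <;> ring
  neg_add_cancel x := by ext <;> simp
  nsmul := nsmulRec
  zsmul := zsmulRec

instance : Ring (Q4 E c b) where
  __ := (inferInstance : AddCommGroup (Q4 E c b))
  left_distrib x y z := by ext <;> simp <;> ring
  right_distrib x y z := by ext <;> simp <;> ring
  zero_mul x := by ext <;> simp
  mul_zero x := by ext <;> simp
  mul_assoc x y z := by ext <;> simp <;> ring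
  one_mul x := by ext <;> simp
  mul_one x := by ext <;> simp

instance : Algebra E (Q4 E c b) where
  algebraMap :=
  { toFun r := ⟨r, 0, 0, 0⟩
    map_one' := by ext <;> simp
    map_mul' r s := by ext <;> simp
    map_zero' := by ext <;> simp
    map_add' r s := by ext <;> simp }
  commutes' r x := by ext <;> simp <;> ring
  smul_def' r x := by ext <;> simp

@[simp] lemma algebraMap_re (r : E) : (algebraMap E (Q4 E c b) r).re = r := rfl
@[simp] lemma algebraMap_imI (r : E) : (algebraMap E (Q4 E c b) r).imI = 0 := rfl
@[simp] lemma algebraMap_imJ (r : E) : (algebraMap E (Q4 E c b) r).imJ = 0 := rfl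
@[simp] lemma algebraMap_imK (r : E) : (algebraMap E (Q4 E c b) r).imK = 0 := rfl

end Q4

section Maps

set_option linter.unusedSectionVars false

variable (E : Type*) [Field E] [CharP E 2] (a b : E)

noncomputable def quatU : Quat E a b := RingQuot.mkAlgHom E (QuatRel E a b) (FreeAlgebra.ι E 0)
noncomputable def quatV : Quat E a b := RingQuot.mkAlgHom E (QuatRel E a b) (FreeAlgebra.ι E 1)

lemma quat_u_sq : quatU E a b * quatU E a b = algebraMap E _ a + quatU E a b := by
  have h := RingQuot.mkAlgHom_rel E (QuatRel.u_sq (E := E) (a := a) (b := b))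
  simp only [map_mul, map_add, AlgHom.commutes] at h
  exact h

lemma quat_v_sq : quatV E a b * quatV E a b = algebraMap E _ b := by
  have h := RingQuot.mkAlgHom_rel E (QuatRel.v_sq (E := E) (a := a) (b := b))
  simp only [map_mul, AlgHom.commutes] at h
  exact h

lemma quat_mul : quatU E a b * quatV E a b = quatV E a b * quatU E a b + quatV E a b := by
  have h := RingQuot.mkAlgHom_rel E (QuatRel.mul (E := E) (a := a) (b := b))
  simp only [map_mul, map_add] at h
  exact h

noncomputable def q4Gen : FreeAlgebra E (Fin 2) →ₐ[E] Q4 E a b :=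
  FreeAlgebra.lift E ![⟨0,1,0,0⟩, ⟨0,0,1,0⟩]

lemma q4rel : ∀ ⦃x y⦄, QuatRel E a b x y → q4Gen E a b x = q4Gen E a b y := by
  rintro x y ⟨⟩ <;>
    ext <;>
      simp [q4Gen, CharTwo.neg_eq, CharTwo.add_self_eq_zero]

noncomputable def quatToQ4 : Quat E a b →ₐ[E] Q4 E a b :=
  RingQuot.liftAlgHom E ⟨q4Gen E a b, q4rel E a b⟩

lemma quatToQ4_mk (z : FreeAlgebra E (Fin 2)) :
    quatToQ4 E a b (RingQuot.mkAlgHom E (QuatRel E a b) z) = q4Gen E a b z :=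
  RingQuot.liftAlgHom_mkAlgHom_apply _ _ _ _

@[simp] lemma quatToQ4_U : quatToQ4 E a b (quatU E a b) = ⟨0,1,0,0⟩ := by
  rw [quatU, quatToQ4_mk]; simp [q4Gen]

@[simp] lemma quatToQ4_V : quatToQ4 E a b (quatV E a b) = ⟨0,0,1,0⟩ := by
  rw [quatV, quatToQ4_mk]; simp [q4Gen]

end Maps

lemma alg_char2 (E : Type*) [Field E] [CharP E 2] {R : Type*} [Ring R] [Algebra E R]
    (z : R) : z + z = 0 := by
  have h2 : (2 : E) = 0 := CharTwo.two_eq_zero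
  calc z + z = (2 : E) • z := (two_smul E z).symm
  _ = 0 := by rw [h2, zero_smul]

lemma W_sq (E : Type*) [Field E] [CharP E 2] {R : Type*} [Ring R] [Algebra E R]
    (t u w s : R) (c : E) (htc : ∀ z : R, t * z = z * t)
    (hu : u * u = algebraMap E R c + u) (hww : w * w = s) (huw : u * w + w * u = w) :
    (t + u + w) * (t + u + w) = t * t + algebraMap E R c + s + (u + w) := by
  calc (t + u + w) * (t + u + w)
      = (t*t + u*u + w*w + (u*w + w*u)) + (t*u + u*t) + (t*w + w*t) := by noncomm_ring
    _ = (t*t + u*u + w*w + (u*w + w*u)) + (t*u + t*u) + (t*w + t*w) := by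
        rw [show u*t = t*u from (htc u).symm, show w*t = t*w from (htc w).symm]
    _ = t*t + u*u + w*w + (u*w + w*u) := by
        rw [alg_char2 E (t*u), alg_char2 E (t*w), add_zero, add_zero]
    _ = t*t + (algebraMap E R c + u) + s + w := by rw [hu, hww, huw]
    _ = t * t + algebraMap E R c + s + (u + w) := by abel

section MkHom
set_option linter.unusedSectionVars false
variable (E : Type*) [Field E] [CharP E 2] (a c b d x : E)

noncomputable def genHom : FreeAlgebra E (Fin 2) →ₐ[E] Quat E c b :=
  FreeAlgebra.lift E
    ![algebraMap E _ x + quatU E c b + d • quatV E c b, quatV E c b]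

lemma genHomRel (h : a + c + d ^ 2 * b = x ^ 2 + x) :
    ∀ ⦃z w⦄, QuatRel E a b z w → genHom E c b d x z = genHom E c b d x w := by
  have h2E : (2 : E) = 0 := CharTwo.two_eq_zero
  have hu := quat_u_sq E c b
  have hv := quat_v_sq E c b
  have huv := quat_mul E c b
  rintro z w ⟨⟩ <;>
    simp only [genHom, map_mul, map_add, AlgHom.commutes, FreeAlgebra.lift_ι_apply,
      Matrix.cons_val_zero, Matrix.cons_val_one, Matrix.head_cons]
  · rw [W_sq E (algebraMap E (Quat E c b) x) (quatU E c b) (d • quatV E c b)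
        (algebraMap E (Quat E c b) (d * d * b)) c
        (fun z => Algebra.commutes x z) hu
        (by rw [smul_mul_assoc, mul_smul_comm, hv, smul_smul, Algebra.smul_def, ← map_mul])
        (by
          rw [mul_smul_comm, smul_mul_assoc, ← smul_add, huv,
            show quatV E c b * quatU E c b + quatV E c b + quatV E c b * quatU E c b
              = quatV E c b from by
              rw [show quatV E c b * quatU E c b + quatV E c b + quatV E c b * quatU E c b
                  = (quatV E c b * quatU E c b + quatV E c b * quatU E c b) + quatV E c b
                  from by abel,
                alg_char2 E (quatV E c b * quatU E c b), zero_add]])]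
    have hsc : algebraMap E (Quat E c b) (x*x) + algebraMap E (Quat E c b) c
        + algebraMap E (Quat E c b) (d*d*b)
        = algebraMap E (Quat E c b) a + algebraMap E (Quat E c b) x := by
      rw [← map_add, ← map_add, ← map_add]
      congr 1
      linear_combination h + (x^2 - a) * h2E
    rw [← map_mul, hsc]
    abel
  · exact hv
  · simp only [add_mul, mul_add]
    rw [huv, smul_mul_assoc, mul_smul_comm, Algebra.commutes]
    abel


noncomputable def mkHom (h : a + c + d ^ 2 * b = x ^ 2 + x) :
    Quat E a b →ₐ[E] Quat E c b :=
  RingQuot.liftAlgHom E ⟨genHom E c b d x, genHomRel E a c b d x h⟩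

lemma mkHom_mk (h : a + c + d ^ 2 * b = x ^ 2 + x) (z : FreeAlgebra E (Fin 2)) :
    mkHom E a c b d x h (RingQuot.mkAlgHom E (QuatRel E a b) z) = genHom E c b d x z :=
  RingQuot.liftAlgHom_mkAlgHom_apply _ _ _ _

lemma mkHom_U (h : a + c + d ^ 2 * b = x ^ 2 + x) :
    mkHom E a c b d x h (quatU E a b)
      = algebraMap E (Quat E c b) x + quatU E c b + d • quatV E c b := by
  rw [quatU, mkHom_mk]; simp [genHom, quatU]

lemma mkHom_V (h : a + c + d ^ 2 * b = x ^ 2 + x) :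
    mkHom E a c b d x h (quatV E a b) = quatV E c b := by
  rw [quatV, mkHom_mk]; simp [genHom, quatV]; rfl

lemma mkHom_comp (h : a + c + d ^ 2 * b = x ^ 2 + x)
    (h' : c + a + d ^ 2 * b = x ^ 2 + x) :
    (mkHom E a c b d x h).comp (mkHom E c a b d x h') = AlgHom.id E (Quat E c b) := by
  have h2E : (2 : E) = 0 := CharTwo.two_eq_zero
  apply RingQuot.ringQuot_ext'
  apply FreeAlgebra.hom_ext
  funext i
  fin_cases i
  · show (mkHom E a c b d x h) ((mkHom E c a b d x h') (quatU E c b)) = quatU E c b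
    rw [mkHom_U, map_add, map_add, map_smul, AlgHom.commutes, mkHom_U, mkHom_V]
    rw [show ∀ A u v : Quat E c b, A + (A + u + v) + v = A + A + (v + v) + u from
      fun A u v => by abel]
    rw [alg_char2 E, alg_char2 E, zero_add, zero_add]
  · show (mkHom E a c b d x h) ((mkHom E c a b d x h') (quatV E c b)) = quatV E c b
    rw [mkHom_V, mkHom_V]

noncomputable def mkEquiv (h : a + c + d ^ 2 * b = x ^ 2 + x) :
    Quat E a b ≃ₐ[E] Quat E c b := by
  have h' : c + a + d ^ 2 * b = x ^ 2 + x := by linear_combination h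
  exact AlgEquiv.ofAlgHom (mkHom E a c b d x h) (mkHom E c a b d x h')
    (mkHom_comp E a c b d x h h') (mkHom_comp E c a b d x h' h)

end MkHom


/-- If `b ∉ E^{×2}`, then `[a,b)_E ≅ [c,b)_E` iff `a + c + d²·b ∈ ℘(E)`
for some `d ∈ E`. -/
theorem stmt4 (E : Type*) [Field E] [CharP E 2] (a c b : E) (hb : b ≠ 0)
    (hb2 : ¬ ∃ e : E, e ^ 2 = b) :
    Nonempty (Quat E a b ≃ₐ[E] Quat E c b) ↔
      ∃ d x : E, a + c + d ^ 2 * b = x ^ 2 + x := by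
  have h2E : (2 : E) = 0 := CharTwo.two_eq_zero
  constructor
  · rintro ⟨φ⟩
    set Φ : Quat E a b →ₐ[E] Q4 E c b := (quatToQ4 E c b).comp φ.toAlgHom with hΦ
    have hU : Φ (quatU E a b) * Φ (quatU E a b)
        = algebraMap E _ a + Φ (quatU E a b) := by
      rw [← map_mul, quat_u_sq, map_add, AlgHom.commutes]
    have hV : Φ (quatV E a b) * Φ (quatV E a b) = algebraMap E _ b := by
      rw [← map_mul, quat_v_sq, AlgHom.commutes]
    have hUV : Φ (quatU E a b) * Φ (quatV E a b)
        = Φ (quatV E a b) * Φ (quatU E a b) + Φ (quatV E a b) := by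
      rw [← map_mul, quat_mul, map_add, map_mul]
    generalize hU4 : Φ (quatU E a b) = U at hU hUV
    generalize hV4 : Φ (quatV E a b) = V at hV hUV
    obtain ⟨α, β, γ, δ⟩ := U
    obtain ⟨p, q, r, s⟩ := V
    have e1 := congrArg Q4.re hU
    have e2 := congrArg Q4.imI hU
    have e3 := congrArg Q4.imJ hU
    have e4 := congrArg Q4.imK hU
    have f1 := congrArg Q4.re hV
    have f2 := congrArg Q4.imI hV
    have g1 := congrArg Q4.re hUV
    have g3 := congrArg Q4.imJ hUV
    have g4 := congrArg Q4.imK hUV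
    simp only [Q4.mul_re, Q4.mul_imI, Q4.mul_imJ, Q4.mul_imK, Q4.add_re, Q4.add_imI,
      Q4.add_imJ, Q4.add_imK, Q4.algebraMap_re, Q4.algebraMap_imI, Q4.algebraMap_imJ,
      Q4.algebraMap_imK, zero_add, add_zero] at e1 e2 e3 e4 f1 f2 g1 g3 g4
    have hβ : β * β = β := by linear_combination e2 - α*β*h2E
    have hq : q = 0 := mul_self_eq_zero.mp (by linear_combination f2 - p*q*h2E)
    subst hq
    rcases mul_eq_zero.mp (show β * (β - 1) = 0 by linear_combination hβ) with hβ0 | hβ1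
    · subst hβ0
      have hγ : γ = 0 := by linear_combination -e3 + α*γ*h2E
      have hδ : δ = 0 := by linear_combination -e4 + α*δ*h2E
      subst hγ; subst hδ
      have hr : r = 0 := by linear_combination -g3
      have hs : s = 0 := by linear_combination -g4
      subst hr; subst hs
      exact absurd ⟨p, by linear_combination f1⟩ hb2
    · have hβ1' : β = 1 := by linear_combination hβ1
      subst hβ1'
      by_cases hδ : δ = 0
      · subst hδ
        exact ⟨γ, α, by linear_combination -e1 + (c + b*γ^2 - α)*h2E⟩
      · by_cases hs : s = 0
        · subst hs
          have hbrd : (b*(r*δ))^2 = b*(1+r)^2 := by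
            linear_combination f1 + (p - b*r*δ)*g1 + (-(b*r) - b*r^2)*h2E
          by_cases hr1 : 1 + r = 0
          · exfalso
            have h0 : b*(r*δ) = 0 := by
              have h00 : (b*(r*δ))^2 = 0 := by rw [hbrd, hr1]; ring
              exact pow_eq_zero_iff (two_ne_zero) |>.mp h00
            rcases mul_eq_zero.mp h0 with h' | h'
            · exact hb h'
            · rcases mul_eq_zero.mp h' with h'' | h''
              · rw [h''] at hr1; simp at hr1
              · exact hδ h''
          · exact absurd ⟨b*r*δ/(1+r), by
              rw [div_pow, show (b*r*δ)^2 = (b*(r*δ))^2 by ring, hbrd, mul_div_assoc,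
                div_self (pow_ne_zero 2 hr1), mul_one]⟩ hb2
        · refine ⟨γ + δ*(1+r)/s, α + b*δ*(γ*s+δ*r)/s, ?_⟩
          have key : (a+c)*s^2 + (γ*s+δ*(1+r))^2*b
              = (α*s + b*δ*(γ*s+δ*r))^2 + (α*s + b*δ*(γ*s+δ*r))*s := by
            linear_combination (-s^2)*e1 + δ^2*f1 + (δ^2*(p + b*γ*s - b*r*δ))*g1 +
              (-α*s^2 + b*δ^2 + b*δ^2*r - b*δ^2*r*s + b*γ*δ*s + b*γ*δ*r*s + b*γ^2*s^2
                - b*α*δ^2*r*s - b*α*γ*δ*s^2 - b^2*δ^4*r^2 - b^2*γ^2*δ^2*s^2 + c*s^2)*h2E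
          apply mul_right_cancel₀ (pow_ne_zero 2 hs)
          have hd : (γ + δ*(1+r)/s) * s = γ*s + δ*(1+r) := by field_simp
          have hx : (α + b*δ*(γ*s+δ*r)/s) * s = α*s + b*δ*(γ*s+δ*r) := by field_simp
          linear_combination key
            + (b*((γ + δ*(1+r)/s)*s + (γ*s + δ*(1+r))))*hd
            - ((α + b*δ*(γ*s+δ*r)/s)*s + (α*s + b*δ*(γ*s+δ*r)) + s)*hx
  · rintro ⟨d, x, h⟩
    exact ⟨mkEquiv E a c b d x h⟩
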